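/- Let n ≥ 1 and r ≥ 2 be integers, let σ ∈ {−1,0,1}^n with σ ≠ 0, let i ∈ {1,…,n} and let a ∈ ℝ be such that σ + a·e_i ∈ {−1,0,1}^n. Then ‖(σ + a e_i)^{⊗r} − σ^{⊗r}‖_F ≤ C_Noise · |a| · ‖σ‖₀^{(r−1)/2}, where C_Noise = (Σ_{j=1}^r binom(r,j)² · 2^{2j})^{1/2}, ‖σ‖₀ is the number of nonzero coordinates of σ, and the Frobenius norm is ‖T‖_F = (Σ_{f : Fin r → Fin n} T(f)²)^{1/2} with (u^{⊗r})(f) = ∏_l u(f(l)). -/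

import Mathlib

open Finset

/-- Number of nonzero coordinates of a vector (the "ℓ₀ norm"). -/
noncomputable def suppCard {n : ℕ} (σ : Fin n → ℝ) : ℕ :=
  (Finset.univ.filter (fun m => σ m ≠ 0)).card

/-- The constant C_Noise = (Σ_{j=1}^r binom(r,j)² 2^{2j})^{1/2}. -/
noncomputable def CNoise (r : ℕ) : ℝ :=
  Real.sqrt (∑ j ∈ Finset.Icc 1 r, ((r.choose j : ℝ)) ^ 2 * 2 ^ (2 * j))

lemma aux_r_le_pow (r : ℕ) (hr : 1 ≤ r) : r ≤ 2 ^ (r - 1) := by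
  have : r - 1 < 2 ^ (r - 1) := Nat.lt_two_pow_self
  omega

/-- for σ ∈ {−1,0,1}^n \ {0} and a ∈ ℝ with σ + a e_i ∈ {−1,0,1}^n,
‖(σ + a e_i)^{⊗r} − σ^{⊗r}‖_F ≤ C_Noise · |a| · ‖σ‖₀^{(r−1)/2}. -/
theorem stmt_17 (n r : ℕ) (hn : 1 ≤ n) (hr : 2 ≤ r)
    (σ : Fin n → ℝ) (hσ : ∀ m, σ m = -1 ∨ σ m = 0 ∨ σ m = 1) (hσ0 : σ ≠ 0)
    (i : Fin n) (a : ℝ)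
    (hσa : ∀ m, (σ m + if m = i then a else 0) = -1 ∨
        (σ m + if m = i then a else 0) = 0 ∨ (σ m + if m = i then a else 0) = 1) :
    Real.sqrt (∑ f : Fin r → Fin n,
        ((∏ l : Fin r, (σ (f l) + if f l = i then a else 0)) -
          (∏ l : Fin r, σ (f l))) ^ 2) ≤
      CNoise r * |a| * (suppCard σ : ℝ) ^ (((r : ℝ) - 1) / 2) := by
  classical
  by_cases ha0 : a = 0
  · have h0 : ∀ f : Fin r → Fin n,
        ((∏ l : Fin r, (σ (f l) + if f l = i then a else 0)) -
          (∏ l : Fin r, σ (f l))) = 0 := by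
      intro f; simp [ha0]
    simp only [h0]
    simp only [ne_eq, OfNat.ofNat_ne_zero, not_false_eq_true, zero_pow,
      Finset.sum_const_zero, Real.sqrt_zero]
    exact mul_nonneg (mul_nonneg (Real.sqrt_nonneg _) (abs_nonneg _))
      (Real.rpow_nonneg (Nat.cast_nonneg _) _)
  -- notation
  set τ : Fin n → ℝ := fun m => σ m + if m = i then a else 0 with hτdef
  have hτeqi : ∀ m : Fin n, m = i → τ m = σ i + a := by
    intro m hm; subst hm; simp [hτdef]
  have hτne : ∀ m : Fin n, m ≠ i → τ m = σ m := by
    intro m hm; simp [hτdef, hm]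
  have hia : σ i + a = -1 ∨ σ i + a = 0 ∨ σ i + a = 1 := by
    have := hσa i; simpa using this
  have ha1 : 1 ≤ |a| := by
    rcases hσ i with h1 | h1 | h1 <;> rcases hia with h2 | h2 | h2 <;>
      (try (exact absurd (by linarith) ha0)) <;> rw [le_abs] <;>
      first
        | (left; linarith)
        | (right; linarith)
  have ha2 : 1 ≤ a ^ 2 := by
    have := sq_abs a
    nlinarith [ha1]
  have hτile : |σ i + a| ≤ 1 := by
    rcases hia with h | h | h <;> rw [h] <;> norm_num
  have hσle : ∀ m, |σ m| ≤ 1 := by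
    intro m; rcases hσ m with h | h | h <;> rw [h] <;> norm_num
  have hs1 : 1 ≤ suppCard σ := by
    obtain ⟨m, hm⟩ := Function.ne_iff.mp hσ0
    have hm' : σ m ≠ 0 := hm
    exact Finset.card_pos.mpr ⟨m, by simp [hm']⟩
  have hs1' : (1 : ℝ) ≤ (suppCard σ : ℝ) := by exact_mod_cast hs1
  have hs0' : (0 : ℝ) ≤ (suppCard σ : ℝ) := by linarith
  have hsum_sq : ∑ m, (σ m) ^ 2 = (suppCard σ : ℝ) := by
    have h : ∀ m : Fin n, (σ m) ^ 2 = if σ m ≠ 0 then (1 : ℝ) else 0 := by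
      intro m; rcases hσ m with h | h | h <;> simp [h]
    rw [Finset.sum_congr rfl (fun m _ => h m), Finset.sum_boole, suppCard]
  -- the weight function
  set v : Fin n → ℝ := fun m => if m = i then 1 else (σ m) ^ 2 with hvdef
  have hv0 : ∀ m, 0 ≤ v m := by
    intro m; simp only [hvdef]; split <;> positivity
  set V : ℝ := ∑ m, v m with hVdef
  have hV0 : 0 ≤ V := Finset.sum_nonneg fun m _ => hv0 m
  have hVle : V ≤ (suppCard σ : ℝ) + 1 := by
    have h : ∀ m : Fin n, v m ≤ (if m = i then (1:ℝ) else 0) + (σ m) ^ 2 := by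
      intro m; simp only [hvdef]; split
      · nlinarith [sq_nonneg (σ m)]
      · simp
    calc V ≤ ∑ m, ((if m = i then (1:ℝ) else 0) + (σ m) ^ 2) :=
          Finset.sum_le_sum fun m _ => h m
      _ = (suppCard σ : ℝ) + 1 := by
          rw [Finset.sum_add_distrib, hsum_sq, Finset.sum_ite_eq' Finset.univ i (fun _ => (1:ℝ))]
          simp [add_comm]
  have hV2s : V ≤ 2 * (suppCard σ : ℝ) := by linarith
  -- pointwise bound
  have hpt : ∀ f : Fin r → Fin n,
      ((∏ l : Fin r, τ (f l)) - ∏ l : Fin r, σ (f l)) ^ 2 ≤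
        4 * a ^ 2 * ∑ l₀ ∈ Finset.univ.filter (fun l => f l = i),
          ∏ l ∈ Finset.univ.erase l₀, v (f l) := by
    intro f
    by_cases hA : ∃ l, f l = i
    · obtain ⟨l₀, hl₀⟩ := hA
      set v' : Fin n → ℝ := fun m => if m = i then 1 else |σ m| with hv'def
      have hv'0 : ∀ m, 0 ≤ v' m := by
        intro m; simp only [hv'def]; split <;> [norm_num; exact abs_nonneg _]
      set P : ℝ := ∏ l ∈ Finset.univ.erase l₀, v' (f l) with hPdef
      have hP0 : 0 ≤ P := Finset.prod_nonneg fun l _ => hv'0 (f l)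
      have hPP : P ^ 2 = ∏ l ∈ Finset.univ.erase l₀, v (f l) := by
        rw [hPdef, ← Finset.prod_pow]
        refine Finset.prod_congr rfl fun l _ => ?_
        simp only [hv'def, hvdef]
        split <;> [norm_num; exact sq_abs _]
      have habs1 : ∀ l : Fin r, |τ (f l)| ≤ v' (f l) := by
        intro l
        by_cases h : f l = i
        · rw [hτeqi _ h]; simp only [hv'def, h, if_pos rfl]; exact hτile
        · rw [hτne _ h]; simp only [hv'def, if_neg h]; exact le_rfl
      have habs2 : ∀ l : Fin r, |σ (f l)| ≤ v' (f l) := by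
        intro l
        by_cases h : f l = i
        · simp only [hv'def, h, if_pos rfl]; exact hσle _
        · simp only [hv'def, if_neg h]; exact le_rfl
      have h1 : |∏ l : Fin r, τ (f l)| ≤ P := by
        rw [← Finset.mul_prod_erase Finset.univ _ (Finset.mem_univ l₀), abs_mul]
        have e1 : |τ (f l₀)| ≤ 1 := by rw [hτeqi _ hl₀]; exact hτile
        calc |τ (f l₀)| * |∏ l ∈ Finset.univ.erase l₀, τ (f l)|
            ≤ 1 * P := by
              apply mul_le_mul e1 ?_ (abs_nonneg _) one_pos.le
              rw [Finset.abs_prod]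
              exact Finset.prod_le_prod (fun l _ => abs_nonneg _) (fun l _ => habs1 l)
          _ = P := one_mul P
      have h2 : |∏ l : Fin r, σ (f l)| ≤ P := by
        rw [← Finset.mul_prod_erase Finset.univ _ (Finset.mem_univ l₀), abs_mul]
        have e1 : |σ (f l₀)| ≤ 1 := by rw [hl₀]; exact hσle i
        calc |σ (f l₀)| * |∏ l ∈ Finset.univ.erase l₀, σ (f l)|
            ≤ 1 * P := by
              apply mul_le_mul e1 ?_ (abs_nonneg _) one_pos.le
              rw [Finset.abs_prod]
              exact Finset.prod_le_prod (fun l _ => abs_nonneg _) (fun l _ => habs2 l)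
          _ = P := one_mul P
      have hd : |(∏ l : Fin r, τ (f l)) - ∏ l : Fin r, σ (f l)| ≤ 2 * P := by
        calc |(∏ l : Fin r, τ (f l)) - ∏ l : Fin r, σ (f l)|
            ≤ |∏ l : Fin r, τ (f l)| + |∏ l : Fin r, σ (f l)| := abs_sub _ _
          _ ≤ 2 * P := by linarith
      have hkey : ((∏ l : Fin r, τ (f l)) - ∏ l : Fin r, σ (f l)) ^ 2 ≤
          4 * a ^ 2 * ∏ l ∈ Finset.univ.erase l₀, v (f l) := by
        rw [← hPP]
        nlinarith [hd, hP0, ha2, abs_nonneg ((∏ l : Fin r, τ (f l)) - ∏ l : Fin r, σ (f l)),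
          sq_abs ((∏ l : Fin r, τ (f l)) - ∏ l : Fin r, σ (f l))]
      refine hkey.trans ?_
      apply mul_le_mul_of_nonneg_left ?_ (by positivity)
      apply Finset.single_le_sum (f := fun l₀ => ∏ l ∈ Finset.univ.erase l₀, v (f l))
        (fun t _ => Finset.prod_nonneg fun l _ => hv0 (f l))
      simp [hl₀]
    · push_neg at hA
      have hfe : Finset.univ.filter (fun l => f l = i) = (∅ : Finset (Fin r)) := by
        ext l; simp [hA l]
      have : (∏ l : Fin r, τ (f l)) = ∏ l : Fin r, σ (f l) :=
        Finset.prod_congr rfl fun l _ => hτne _ (hA l)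
      rw [this, sub_self, hfe]
      simp
  -- the sum bound
  have hsum : (∑ f : Fin r → Fin n,
      ((∏ l : Fin r, τ (f l)) - ∏ l : Fin r, σ (f l)) ^ 2) ≤
      4 * a ^ 2 * (r : ℝ) * V ^ (r - 1) := by
    calc (∑ f : Fin r → Fin n, ((∏ l : Fin r, τ (f l)) - ∏ l : Fin r, σ (f l)) ^ 2)
        ≤ ∑ f : Fin r → Fin n, 4 * a ^ 2 * ∑ l₀ ∈ Finset.univ.filter (fun l => f l = i),
            ∏ l ∈ Finset.univ.erase l₀, v (f l) :=
          Finset.sum_le_sum fun f _ => hpt f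
      _ = 4 * a ^ 2 * ∑ f : Fin r → Fin n, ∑ l₀ : Fin r,
            (if f l₀ = i then ∏ l ∈ Finset.univ.erase l₀, v (f l) else 0) := by
          rw [Finset.mul_sum]
          refine Finset.sum_congr rfl fun f _ => ?_
          rw [Finset.sum_filter]
      _ = 4 * a ^ 2 * ∑ l₀ : Fin r, ∑ f : Fin r → Fin n,
            (if f l₀ = i then ∏ l ∈ Finset.univ.erase l₀, v (f l) else 0) := by
          rw [Finset.sum_comm]
      _ = 4 * a ^ 2 * ∑ l₀ : Fin r, V ^ (r - 1) := by
          congr 1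
          refine Finset.sum_congr rfl fun l₀ _ => ?_
          -- inner sum computation
          have hw : ∀ f : Fin r → Fin n,
              (if f l₀ = i then ∏ l ∈ Finset.univ.erase l₀, v (f l) else 0) =
              ∏ l : Fin r, (if l = l₀ then (if f l = i then (1:ℝ) else 0) else v (f l)) := by
            intro f
            rw [← Finset.mul_prod_erase Finset.univ _ (Finset.mem_univ l₀)]
            rw [if_pos rfl]
            have : ∏ l ∈ Finset.univ.erase l₀,
                (if l = l₀ then (if f l = i then (1:ℝ) else 0) else v (f l)) =
                ∏ l ∈ Finset.univ.erase l₀, v (f l) := by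
              refine Finset.prod_congr rfl fun l hl => ?_
              rw [if_neg (Finset.ne_of_mem_erase hl)]
            rw [this]
            split <;> simp
          calc ∑ f : Fin r → Fin n,
                (if f l₀ = i then ∏ l ∈ Finset.univ.erase l₀, v (f l) else 0)
              = ∑ f : Fin r → Fin n, ∏ l : Fin r,
                  (if l = l₀ then (if f l = i then (1:ℝ) else 0) else v (f l)) :=
                Finset.sum_congr rfl fun f _ => hw f
            _ = ∏ l : Fin r, ∑ m : Fin n,
                  (if l = l₀ then (if m = i then (1:ℝ) else 0) else v m) := by
                have h := Finset.prod_univ_sum (fun _ : Fin r => (Finset.univ : Finset (Fin n)))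
                  (fun l m => if l = l₀ then (if m = i then (1:ℝ) else 0) else v m)
                rw [Fintype.piFinset_univ] at h
                exact h.symm
            _ = (∑ m : Fin n, (if l₀ = l₀ then (if m = i then (1:ℝ) else 0) else v m)) *
                ∏ l ∈ Finset.univ.erase l₀, ∑ m : Fin n,
                  (if l = l₀ then (if m = i then (1:ℝ) else 0) else v m) :=
                (Finset.mul_prod_erase Finset.univ _ (Finset.mem_univ l₀)).symm
            _ = V ^ (r - 1) := by
                have e1 : (∑ m : Fin n,
                    (if l₀ = l₀ then (if m = i then (1:ℝ) else 0) else v m)) = 1 := by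
                  simp
                have e2 : ∀ l ∈ Finset.univ.erase l₀,
                    (∑ m : Fin n, (if l = l₀ then (if m = i then (1:ℝ) else 0) else v m)) = V := by
                  intro l hl
                  rw [hVdef]
                  refine Finset.sum_congr rfl fun m _ => ?_
                  rw [if_neg (Finset.ne_of_mem_erase hl)]
                rw [e1, Finset.prod_congr rfl e2, Finset.prod_const,
                  Finset.card_erase_of_mem (Finset.mem_univ l₀), Finset.card_univ,
                  Fintype.card_fin, one_mul]
      _ = 4 * a ^ 2 * (r : ℝ) * V ^ (r - 1) := by
          rw [Finset.sum_const, Finset.card_univ, Fintype.card_fin, nsmul_eq_mul]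
          ring
  -- numeric bound : 4 * r * (2s)^(r-1) ≤ CNoise² * s^(r-1)
  have hC2 : (4 : ℝ) ^ r ≤ CNoise r ^ 2 := by
    rw [CNoise, Real.sq_sqrt]
    · have hmem : r ∈ Finset.Icc 1 r := by
        rw [Finset.mem_Icc]; omega
      have := Finset.single_le_sum
        (f := fun j => ((r.choose j : ℝ)) ^ 2 * 2 ^ (2 * j))
        (fun j _ => by positivity) hmem
      calc (4 : ℝ) ^ r = ((r.choose r : ℝ)) ^ 2 * 2 ^ (2 * r) := by
            rw [Nat.choose_self]; rw [pow_mul]; norm_num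
        _ ≤ _ := this
    · exact Finset.sum_nonneg fun j _ => by positivity
  have hC0 : 0 ≤ CNoise r := Real.sqrt_nonneg _
  have hnum : 4 * (r : ℝ) * 2 ^ (r - 1) ≤ CNoise r ^ 2 := by
    refine le_trans ?_ hC2
    have h1 : (r : ℝ) ≤ 2 ^ (r - 1) := by
      exact_mod_cast Nat.cast_le.mpr (aux_r_le_pow r (by omega))
    have h4 : (4 : ℝ) ^ r = 4 * 2 ^ (r - 1) * 2 ^ (r - 1) := by
      have : (4 : ℝ) ^ r = 2 ^ (2 * r) := by
        rw [pow_mul]; norm_num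
      rw [this]
      have : 2 * r = (r - 1) + (r - 1) + 2 := by omega
      rw [this, pow_add, pow_add]
      ring
    rw [h4]
    have h2 : (0:ℝ) ≤ 2 ^ (r-1) := by positivity
    nlinarith
  -- final: compare squares
  have hX : ((suppCard σ : ℝ) ^ (((r : ℝ) - 1) / 2)) ^ 2 = (suppCard σ : ℝ) ^ (r - 1) := by
    rw [← Real.rpow_natCast ((suppCard σ : ℝ) ^ (((r : ℝ) - 1) / 2)) 2,
      ← Real.rpow_mul hs0']
    have : ((r : ℝ) - 1) / 2 * (2 : ℕ) = ((r - 1 : ℕ) : ℝ) := by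
      push_cast [Nat.cast_sub (by omega : 1 ≤ r)]
      ring
    rw [this, Real.rpow_natCast]
  have hRHS2 : (CNoise r * |a| * (suppCard σ : ℝ) ^ (((r : ℝ) - 1) / 2)) ^ 2 =
      CNoise r ^ 2 * a ^ 2 * (suppCard σ : ℝ) ^ (r - 1) := by
    rw [mul_pow, mul_pow, sq_abs, hX]
  have hfinal : (∑ f : Fin r → Fin n,
      ((∏ l : Fin r, τ (f l)) - ∏ l : Fin r, σ (f l)) ^ 2) ≤
      (CNoise r * |a| * (suppCard σ : ℝ) ^ (((r : ℝ) - 1) / 2)) ^ 2 := by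
    rw [hRHS2]
    refine hsum.trans ?_
    have hVpow : V ^ (r - 1) ≤ (2 * (suppCard σ : ℝ)) ^ (r - 1) :=
      pow_le_pow_left₀ hV0 hV2s _
    have h2pow : (2 * (suppCard σ : ℝ)) ^ (r - 1) =
        2 ^ (r - 1) * (suppCard σ : ℝ) ^ (r - 1) := mul_pow _ _ _
    have hspow : (0:ℝ) ≤ (suppCard σ : ℝ) ^ (r - 1) := by positivity
    calc 4 * a ^ 2 * (r : ℝ) * V ^ (r - 1)
        ≤ 4 * a ^ 2 * (r : ℝ) * (2 ^ (r - 1) * (suppCard σ : ℝ) ^ (r - 1)) := by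
          rw [← h2pow]
          apply mul_le_mul_of_nonneg_left hVpow (by positivity)
      _ = (4 * (r : ℝ) * 2 ^ (r - 1)) * a ^ 2 * (suppCard σ : ℝ) ^ (r - 1) := by ring
      _ ≤ CNoise r ^ 2 * a ^ 2 * (suppCard σ : ℝ) ^ (r - 1) := by
          apply mul_le_mul_of_nonneg_right ?_ hspow
          apply mul_le_mul_of_nonneg_right hnum (by positivity)
  have hR0 : 0 ≤ CNoise r * |a| * (suppCard σ : ℝ) ^ (((r : ℝ) - 1) / 2) := by positivity
  calc Real.sqrt (∑ f : Fin r → Fin n,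
        ((∏ l : Fin r, (σ (f l) + if f l = i then a else 0)) -
          (∏ l : Fin r, σ (f l))) ^ 2)
      ≤ Real.sqrt ((CNoise r * |a| * (suppCard σ : ℝ) ^ (((r : ℝ) - 1) / 2)) ^ 2) :=
        Real.sqrt_le_sqrt hfinal
    _ = CNoise r * |a| * (suppCard σ : ℝ) ^ (((r : ℝ) - 1) / 2) := Real.sqrt_sq hR0
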